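/- If x ≥ 1 is a real number and 0 ≤ k ≤ x/2 is an integer, then the falling factorial satisfies (x)_k = x^k · exp(−k(k−1)/(2x) + O(k³/x²)); more precisely, there is an absolute constant C such that |log((x)_k / x^k) + k(k−1)/(2x)| ≤ C k³/x² for all such x, k. -/

import Mathlib

lemma aux_prod (x : ℝ) (k : ℕ) :
    (descPochhammer ℝ k).eval x = ∏ i ∈ Finset.range k, (x - i) := by
  induction k with
  | zero => simp
  | succ n ih => rw [descPochhammer_succ_eval, ih, Finset.prod_range_succ]

lemma aux_log (y : ℝ) (h0 : 0 ≤ y) (h2 : y ≤ 1/2) : |Real.log (1 - y) + y| ≤ 2 * y ^ 2 := by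
  have h1 : |y| < 1 := by rw [abs_of_nonneg h0]; linarith
  have h := Real.abs_log_sub_add_sum_range_le h1 1
  simp only [Finset.sum_range_one, pow_one, abs_of_nonneg h0, Nat.cast_zero, zero_add,
    div_one] at h
  rw [add_comm] at h
  refine h.trans ?_
  norm_num at h ⊢
  rw [div_le_iff₀ (by linarith)]
  nlinarith [sq_nonneg y]

/-- There is an absolute constant `C` such that for every real `x ≥ 1` and integer
`0 ≤ k ≤ x/2`, `|log((x)_k / x^k) + k(k-1)/(2x)| ≤ C k³/x²`. -/
theorem stmt_9 : ∃ C : ℝ, 0 < C ∧ ∀ (x : ℝ) (k : ℕ), 1 ≤ x → (k : ℝ) ≤ x / 2 →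
    |Real.log ((descPochhammer ℝ k).eval x / x ^ k) + (k : ℝ) * ((k : ℝ) - 1) / (2 * x)|
      ≤ C * (k : ℝ) ^ 3 / x ^ 2 := by
  refine ⟨2, by norm_num, fun x k hx hk => ?_⟩
  have hx0 : (0:ℝ) < x := by linarith
  have hik : ∀ i : ℕ, i ∈ Finset.range k → (0:ℝ) ≤ (i:ℝ) / x ∧ (i:ℝ) / x ≤ 1/2 := by
    intro i hi
    have hi' : (i:ℝ) < k := by exact_mod_cast Finset.mem_range.mp hi
    constructor
    · positivity
    · rw [div_le_iff₀ hx0]; linarith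
  have hpos : ∀ i ∈ Finset.range k, (0:ℝ) < 1 - (i:ℝ)/x := by
    intro i hi
    have := (hik i hi).2
    linarith
  have hprod : (descPochhammer ℝ k).eval x / x ^ k
      = ∏ i ∈ Finset.range k, (1 - (i:ℝ)/x) := by
    rw [aux_prod, show x ^ k = ∏ _i ∈ Finset.range k, x by simp,
      ← Finset.prod_div_distrib]
    exact Finset.prod_congr rfl fun i _ => by rw [sub_div, div_self hx0.ne']
  rcases Nat.eq_zero_or_pos k with hk0 | hk0
  · subst hk0; simp
  have hlog : Real.log ((descPochhammer ℝ k).eval x / x ^ k)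
      = ∑ i ∈ Finset.range k, Real.log (1 - (i:ℝ)/x) := by
    rw [hprod, Real.log_prod fun i hi => (hpos i hi).ne']
  have hsum : (k : ℝ) * ((k : ℝ) - 1) / (2 * x) = ∑ i ∈ Finset.range k, (i:ℝ)/x := by
    have hs : ∑ i ∈ Finset.range k, (i:ℝ) = (k:ℝ) * ((k:ℝ) - 1) / 2 := by
      have h2 := congrArg (fun n : ℕ => (n : ℝ)) (Finset.sum_range_id_mul_two k)
      push_cast [Nat.cast_sub hk0] at h2
      linarith
    rw [← Finset.sum_div, hs]
    ring
  rw [hlog, hsum, ← Finset.sum_add_distrib]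
  calc |∑ i ∈ Finset.range k, (Real.log (1 - (i:ℝ)/x) + (i:ℝ)/x)|
      ≤ ∑ i ∈ Finset.range k, |Real.log (1 - (i:ℝ)/x) + (i:ℝ)/x| :=
        Finset.abs_sum_le_sum_abs _ _
    _ ≤ ∑ _i ∈ Finset.range k, 2 * ((k:ℝ)/x) ^ 2 := by
        refine Finset.sum_le_sum fun i hi => ?_
        refine le_trans (aux_log _ (hik i hi).1 (hik i hi).2) ?_
        have hi' : (i:ℝ) ≤ k := by
          exact_mod_cast (Finset.mem_range.mp hi).le
        gcongr
    _ = 2 * (k:ℝ) ^ 3 / x ^ 2 := by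
        rw [Finset.sum_const, Finset.card_range, nsmul_eq_mul]
        field_simp
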